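/- For all α ∈ Π and all integers n ≥ 0, the divided-power operators satisfy ε_α^{[n]}(P_𝒵(λ)) ⊆ P_𝒵(λ) and φ_α^{[n]}(P_𝒵(λ)) ⊆ P_𝒵(λ). -/

import Mathlib

/-!
Path model `P_𝒬(λ)` with divided powers `ε_α^{[n]} = ε_αⁿ/[n]_α!`, `φ_α^{[n]} = φ_αⁿ/[n]_α!`.
`P_𝒵(λ)` is the `𝒵 = ℤ[v,v⁻¹]`-lattice spanned by the normalized paths `⟨δ⟩ = (1/δ^!)·δ`.

STATEMENT: for all `α ∈ Π` and `n ≥ 0`, the operators `ε_α^{[n]}` and `φ_α^{[n]}`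
preserve `P_𝒵(λ)`.
-/

noncomputable section

/-- `𝒵 = ℤ[v,v⁻¹]` realized as a subalgebra of `𝒬 = ℚ(v)`. -/
def ZZ : Subalgebra ℤ (RatFunc ℚ) := Algebra.adjoin ℤ {RatFunc.X, RatFunc.X⁻¹}

/-- The quantum integer `[n]_{v^d}` in `ℚ(v)`. -/
def qd (d : ℕ) (n : ℤ) : RatFunc ℚ :=
  (RatFunc.X ^ ((d : ℤ) * n) - RatFunc.X ^ (-((d : ℤ) * n))) /
    (RatFunc.X ^ (d : ℤ) - RatFunc.X ^ (-(d : ℤ)))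

/-- The quantum factorial `[r]!_{v^d}`. -/
def qfacd (d r : ℕ) : RatFunc ℚ := ∏ i ∈ Finset.range r, qd d ((i : ℤ) + 1)

/-- The quantum binomial coefficient `qbinom(n,r)` in the variable `v^d`. -/
def qbinomd (d : ℕ) (n : ℤ) (r : ℕ) : RatFunc ℚ :=
  (∏ i ∈ Finset.range r, qd d (n - (i : ℤ))) / qfacd d r

variable {X : Type*} [AddCommGroup X] {Pi : Type*} [DecidableEq Pi]

/-- The height of a path: the sum of its entries, as an element of the weight lattice. -/
def hgt (root : Pi → X) (δ : List Pi) : X := (δ.map root).sum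

/-- The operator `φ_α`: prepending `α` to a path, extended linearly. -/
def phiOp (α : Pi) : Module.End (RatFunc ℚ) (List Pi →₀ RatFunc ℚ) :=
  Finsupp.lmapDomain (RatFunc ℚ) (RatFunc ℚ) (List.cons α)

/-- `ε_α` on basis paths. -/
def epsB (root : Pi → X) (pair : Pi → X →+ ℤ) (dd : Pi → ℕ) (lam : X) (α : Pi) :
    List Pi → (List Pi →₀ RatFunc ℚ)
  | [] => 0
  | β :: t =>
      (if β = α then Finsupp.single t (qd (dd α) (pair α (lam - hgt root t))) else 0)
        + Finsupp.mapDomain (List.cons β) (epsB root pair dd lam α t)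

/-- The operator `ε_α`, the linear extension of `epsB`. -/
def epsOp (root : Pi → X) (pair : Pi → X →+ ℤ) (dd : Pi → ℕ) (lam : X) (α : Pi) :
    Module.End (RatFunc ℚ) (List Pi →₀ RatFunc ℚ) :=
  Finsupp.linearCombination (RatFunc ℚ) (epsB root pair dd lam α)

/-- The divided power `ε_α^{[n]} = ε_α^n / [n]_α!`. -/
def epsDP (root : Pi → X) (pair : Pi → X →+ ℤ) (dd : Pi → ℕ) (lam : X) (α : Pi) (n : ℕ) :
    Module.End (RatFunc ℚ) (List Pi →₀ RatFunc ℚ) :=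
  (qfacd (dd α) n)⁻¹ • (epsOp root pair dd lam α) ^ n

/-- The divided power `φ_α^{[n]} = φ_α^n / [n]_α!`. -/
def phiDP (dd : Pi → ℕ) (α : Pi) (n : ℕ) :
    Module.End (RatFunc ℚ) (List Pi →₀ RatFunc ℚ) :=
  (qfacd (dd α) n)⁻¹ • (phiOp α) ^ n

/-- `ε_γ = ε_{γ₁} ∘ ⋯ ∘ ε_{γ_m}` for a path `γ`. -/
def epsPath (root : Pi → X) (pair : Pi → X →+ ℤ) (dd : Pi → ℕ) (lam : X) (γ : List Pi) :
    Module.End (RatFunc ℚ) (List Pi →₀ RatFunc ℚ) :=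
  (γ.map (epsOp root pair dd lam)).prod

/-- `φ_γ = φ_{γ₁} ∘ ⋯ ∘ φ_{γ_m}` for a path `γ`. -/
def phiPath (γ : List Pi) : Module.End (RatFunc ℚ) (List Pi →₀ RatFunc ℚ) :=
  (γ.map phiOp).prod

open Classical in
/-- The value `b_λ(δ,γ)` on basis paths. -/
def bentryQ (root : Pi → X) (pair : Pi → X →+ ℤ) (dd : Pi → ℕ) (lam : X) (δ γ : List Pi) :
    RatFunc ℚ :=
  if hgt root δ = hgt root γ then
    (epsPath root pair dd lam δ.reverse (Finsupp.single γ 1)) [] else 0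

/-- The bilinear form `b_λ` on `P_𝒬(λ)`. -/
def bformQ (root : Pi → X) (pair : Pi → X →+ ℤ) (dd : Pi → ℕ) (lam : X)
    (x y : List Pi →₀ RatFunc ℚ) : RatFunc ℚ :=
  x.sum fun δ cδ => y.sum fun γ cγ => cδ * cγ * bentryQ root pair dd lam δ γ

/-- Length of the initial run of `α`'s in a list. -/
def runLen (α : Pi) : List Pi → ℕ
  | [] => 0
  | β :: t => if β = α then runLen α t + 1 else 0

/-- The scalar `δ^!`, a product of quantum factorials of run lengths. -/
def pfact (dd : Pi → ℕ) : List Pi → RatFunc ℚ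
  | [] => 1
  | α :: t => qd (dd α) ((runLen α t : ℤ) + 1) * pfact dd t

/-- The normalized basis element `⟨δ⟩ = (1/δ^!)·δ`. -/
def nbasis (dd : Pi → ℕ) (δ : List Pi) : List Pi →₀ RatFunc ℚ :=
  (pfact dd δ)⁻¹ • Finsupp.single δ 1

/-- The lattice `P_𝒵(λ)`: the set of `𝒵`-linear combinations of the `⟨δ⟩`. -/
def latticeP (dd : Pi → ℕ) : Set (List Pi →₀ RatFunc ℚ) :=
  {x | ∃ (s : Finset (List Pi)) (c : List Pi → RatFunc ℚ),
      (∀ δ, c δ ∈ ZZ) ∧ x = ∑ δ ∈ s, c δ • nbasis dd δ}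

/-- The weight space `P_𝒬(λ)_μ`, spanned by the paths of height `λ - μ`. -/
def PQcomp (root : Pi → X) (lam μ : X) : Submodule (RatFunc ℚ) (List Pi →₀ RatFunc ℚ) :=
  Submodule.span (RatFunc ℚ)
    {p | ∃ δ : List Pi, hgt root δ = lam - μ ∧ p = Finsupp.single δ 1}



section ScalarLemmas

lemma Xne : (RatFunc.X : RatFunc ℚ) ≠ 0 := RatFunc.X_ne_zero

lemma Nne {e : ℤ} (he : e ≠ 0) :
    (RatFunc.X : RatFunc ℚ) ^ e - RatFunc.X ^ (-e) ≠ 0 := by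
  intro h
  have he' : (RatFunc.X : RatFunc ℚ) ^ e = RatFunc.X ^ (-e) := sub_eq_zero.mp h
  have h2e : (RatFunc.X : RatFunc ℚ) ^ (2 * e) = 1 := by
    rw [two_mul, zpow_add₀ Xne]
    nth_rewrite 1 [he']
    rw [← zpow_add₀ Xne, neg_add_cancel, zpow_zero]
  have h2 : (RatFunc.X : RatFunc ℚ) ^ (2 * |e|) = 1 := by
    rcases abs_choice e with h' | h'
    · rw [h']; exact h2e
    · rw [h', show 2 * -e = -(2 * e) by ring, zpow_neg, h2e, inv_one]
  have habs : 1 ≤ |e| := Int.one_le_abs he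
  rw [show (2 * |e|) = ((2 * |e|).toNat : ℤ) by omega, zpow_natCast] at h2
  have h3 : (Polynomial.X : Polynomial ℚ) ^ (2 * |e|).toNat = 1 := by
    apply RatFunc.algebraMap_injective ℚ
    rw [map_pow, map_one, RatFunc.algebraMap_X, h2]
  have := congrArg (Polynomial.eval 0) h3
  simp [zero_pow (by omega : (2 * |e|).toNat ≠ 0)] at this

variable {d : ℕ}

lemma qd_zero : qd d 0 = 0 := by simp [qd]

lemma qd_one (hd : 1 ≤ d) : qd d 1 = 1 := by
  rw [qd, mul_one, div_self (Nne (by exact_mod_cast Nat.one_le_iff_ne_zero.mp hd))]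

lemma qd_neg (n : ℤ) : qd d (-n) = - qd d n := by
  rw [qd, qd, show (d:ℤ) * -n = -((d:ℤ)*n) by ring, neg_neg, ← neg_div]
  ring_nf

lemma qd_add (a b : ℤ) :
    qd d (a + b) = RatFunc.X ^ ((d:ℤ)*b) * qd d a + RatFunc.X ^ (-((d:ℤ)*a)) * qd d b := by
  rw [qd, qd, qd, ← mul_div_assoc, ← mul_div_assoc, ← add_div]
  congr 1
  rw [show (d:ℤ) * (a+b) = (d:ℤ)*a + (d:ℤ)*b by ring, neg_add,
    zpow_add₀ Xne, zpow_add₀ Xne]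
  ring

lemma qd_ne_zero (hd : 1 ≤ d) {n : ℤ} (hn : n ≠ 0) : qd d n ≠ 0 := by
  have h1 : ((d:ℤ)) ≠ 0 := by exact_mod_cast Nat.one_le_iff_ne_zero.mp hd
  exact div_ne_zero (Nne (by exact mul_ne_zero h1 hn)) (Nne h1)

lemma zpow_mem_ZZ (k : ℤ) : (RatFunc.X : RatFunc ℚ) ^ k ∈ ZZ := by
  have hX : (RatFunc.X : RatFunc ℚ) ∈ ZZ := Algebra.subset_adjoin (by simp)
  have hXi : (RatFunc.X : RatFunc ℚ)⁻¹ ∈ ZZ := Algebra.subset_adjoin (by simp)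
  rcases le_or_gt 0 k with h | h
  · lift k to ℕ using h
    rw [zpow_natCast]; exact pow_mem hX _
  · have hk : (RatFunc.X : RatFunc ℚ) ^ k = (RatFunc.X⁻¹) ^ (-k).toNat := by
      rw [inv_pow, ← zpow_natCast, Int.toNat_of_nonneg (by omega), ← zpow_neg, neg_neg]
    rw [hk]; exact pow_mem hXi _

lemma qd_mem (hd : 1 ≤ d) (n : ℤ) : qd d n ∈ ZZ := by
  have hnat : ∀ k : ℕ, qd d (k : ℤ) ∈ ZZ := by
    intro k
    induction k with
    | zero => simpa [qd_zero] using zero_mem ZZ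
    | succ k ih =>
        have := qd_add (d := d) (k : ℤ) 1
        rw [show ((k:ℤ) + 1) = ((k+1 : ℕ) : ℤ) by push_cast; ring] at this
        rw [this, qd_one hd]
        exact add_mem (mul_mem (zpow_mem_ZZ _) ih) (mul_mem (zpow_mem_ZZ _) (one_mem ZZ))
  rcases le_or_gt 0 n with h | h
  · lift n to ℕ using h; exact hnat n
  · have : qd d n = - qd d (((-n).toNat : ℤ)) := by
      rw [Int.toNat_of_nonneg (by omega), qd_neg, neg_neg]
    rw [this]
    exact neg_mem (hnat _)

lemma qfacd_succ (r : ℕ) : qfacd d (r+1) = qfacd d r * qd d ((r:ℤ)+1) :=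
  Finset.prod_range_succ _ _

lemma qfacd_zero : qfacd d 0 = 1 := rfl

lemma qfacd_ne_zero (hd : 1 ≤ d) (r : ℕ) : qfacd d r ≠ 0 :=
  Finset.prod_ne_zero_iff.mpr fun i _ => qd_ne_zero hd (by omega)

lemma qbinomd_zero (m : ℤ) : qbinomd d m 0 = 1 := by
  simp [qbinomd, qfacd]

lemma qbinomd_A (hd : 1 ≤ d) (m : ℤ) (t : ℕ) :
    qd d ((t:ℤ)+1) * qbinomd d m (t+1) = qd d (m - t) * qbinomd d m t := by
  have h1 : qd d ((t:ℤ)+1) ≠ 0 := qd_ne_zero hd (by omega)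
  have h2 : qfacd d t ≠ 0 := qfacd_ne_zero hd t
  rw [qbinomd, qbinomd, qfacd_succ, Finset.prod_range_succ]
  field_simp

lemma qbinomd_P2 (hd : 1 ≤ d) (m : ℤ) (t : ℕ) :
    qbinomd d m (t+1) = RatFunc.X ^ ((d:ℤ)*(m - t - 1)) * qbinomd d (m-1) t
      + RatFunc.X ^ (-((d:ℤ)*((t:ℤ)+1))) * qbinomd d (m-1) (t+1) := by
  have h1 : qd d ((t:ℤ)+1) ≠ 0 := qd_ne_zero hd (by omega)
  have h2 : qfacd d t ≠ 0 := qfacd_ne_zero hd t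
  have f1 : (∏ i ∈ Finset.range (t+1), qd d (m - (i:ℤ)))
      = qd d m * ∏ i ∈ Finset.range t, qd d (m - 1 - (i:ℤ)) := by
    rw [Finset.prod_range_succ']
    rw [Finset.prod_congr rfl (fun i _ => by
      rw [show m - ((i:ℕ)+1 : ℕ) = m - 1 - (i:ℤ) by push_cast; ring])]
    rw [show m - (0:ℕ) = m by simp, mul_comm]
  have f2 : qd d m = RatFunc.X ^ ((d:ℤ)*(m - t - 1)) * qd d ((t:ℤ)+1)
      + RatFunc.X ^ (-((d:ℤ)*((t:ℤ)+1))) * qd d (m - t - 1) := by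
    have := qd_add (d := d) ((t:ℤ)+1) (m - t - 1)
    rw [show ((t:ℤ)+1) + (m - t - 1) = m by ring] at this
    exact this
  have f3 : (∏ i ∈ Finset.range (t+1), qd d (m - 1 - (i:ℤ)))
      = (∏ i ∈ Finset.range t, qd d (m - 1 - (i:ℤ))) * qd d (m - t - 1) := by
    rw [Finset.prod_range_succ, show m - 1 - (t:ℤ) = m - t - 1 by ring]
  rw [qbinomd, qbinomd, qbinomd, qfacd_succ, f1, f3]
  set P := ∏ i ∈ Finset.range t, qd d (m - 1 - (i:ℤ)) with hP
  rw [f2]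
  have hX : (RatFunc.X : RatFunc ℚ) ^ ((d:ℤ)*((t:ℤ)+1)) ≠ 0 := zpow_ne_zero _ Xne
  field_simp

lemma qbinomd_neg (m : ℤ) (t : ℕ) :
    qbinomd d (-m) t = (-1)^t * qbinomd d (m + t - 1) t := by
  rw [qbinomd, qbinomd]
  have e1 : (∏ i ∈ Finset.range t, qd d (-m - (i:ℤ)))
      = (-1)^t * ∏ i ∈ Finset.range t, qd d (m + (i:ℤ)) := by
    rw [Finset.prod_congr rfl (fun i _ => by
      rw [show -m - (i:ℤ) = -(m + i) by ring, qd_neg, neg_eq_neg_one_mul])]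
    rw [Finset.prod_mul_distrib, Finset.prod_const, Finset.card_range]
  have e2 : (∏ i ∈ Finset.range t, qd d (m + t - 1 - (i:ℤ)))
      = ∏ i ∈ Finset.range t, qd d (m + (i:ℤ)) := by
    have := Finset.prod_range_reflect (fun j => qd d (m + (j:ℤ))) t
    rw [← this]
    refine Finset.prod_congr rfl (fun i hi => ?_)
    have hi' : i < t := Finset.mem_range.mp hi
    congr 1
    push_cast [Nat.cast_sub (by omega : i ≤ t - 1), Nat.cast_sub (by omega : 1 ≤ t)]
    ring
  rw [e1, e2, mul_div_assoc]

lemma qbinomd_zero_pos (hd : 1 ≤ d) (t : ℕ) : qbinomd d 0 (t+1) = 0 := by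
  rw [qbinomd, Finset.prod_range_succ', show ((0:ℤ) - (0:ℕ)) = 0 by simp, qd_zero,
    mul_zero, zero_div]

lemma qbinomd_mem (hd : 1 ≤ d) (m : ℤ) (t : ℕ) : qbinomd d m t ∈ ZZ := by
  have hnat : ∀ (k t : ℕ), qbinomd d (k:ℤ) t ∈ ZZ := by
    intro k
    induction k with
    | zero =>
        intro t
        cases t with
        | zero => simpa [qbinomd_zero] using one_mem ZZ
        | succ t => rw [show ((0:ℕ):ℤ) = 0 by simp, qbinomd_zero_pos hd]; exact zero_mem ZZ
    | succ k ih =>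
        intro t
        cases t with
        | zero => simpa [qbinomd_zero] using one_mem ZZ
        | succ t =>
            rw [qbinomd_P2 hd, show ((k+1:ℕ):ℤ) - 1 = (k:ℤ) by push_cast; ring]
            exact add_mem (mul_mem (zpow_mem_ZZ _) (ih t)) (mul_mem (zpow_mem_ZZ _) (ih (t+1)))
  rcases le_or_gt 0 m with h | h
  · lift m to ℕ using h; exact hnat m t
  · have hm : m = -(((-m).toNat : ℕ) : ℤ) := by omega
    rw [hm, qbinomd_neg]
    rcases le_or_gt 0 (((-m).toNat : ℤ) + t - 1) with h2 | h2
    · have : (((-m).toNat : ℤ) + t - 1) = ((((-m).toNat + t - 1 : ℕ) : ℤ)) := by omega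
      rw [this]
      exact mul_mem (pow_mem (neg_mem (one_mem ZZ)) t) (hnat _ _)
    · -- (-m).toNat + t - 1 < 0 impossible since -m ≥ 1
      omega

-- product of descending qd's equals ratio of factorials
lemma qfac_aux (s : ℕ) : ∀ r : ℕ,
    (∏ i ∈ Finset.range s, qd d ((s:ℤ) + r - i)) * qfacd d r = qfacd d (s + r) := by
  induction s with
  | zero => intro r; simp
  | succ s ih =>
      intro r
      rw [Finset.prod_range_succ]
      rw [Finset.prod_congr rfl (fun i _ => by
        rw [show ((s+1:ℕ):ℤ) + r - i = (s:ℤ) + ((r+1:ℕ):ℤ) - i by push_cast; ring])]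
      rw [show ((s+1:ℕ):ℤ) + r - s = (r:ℤ) + 1 by push_cast; ring]
      rw [mul_assoc, show qd d ((r:ℤ)+1) * qfacd d r = qfacd d (r+1) by
        rw [qfacd_succ, mul_comm]]
      rw [ih (r+1), show s + (r+1) = s + 1 + r by omega]

lemma qbinomd_nat (hd : 1 ≤ d) (s r : ℕ) :
    qbinomd d ((s:ℤ) + r) s = qfacd d (s + r) / (qfacd d s * qfacd d r) := by
  rw [qbinomd, ← qfac_aux s r]
  field_simp [qfacd_ne_zero hd]

lemma qbinomd_self (hd : 1 ≤ d) (s : ℕ) : qbinomd d (s:ℤ) s = 1 := by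
  have h := qbinomd_nat hd s 0
  rw [Nat.add_zero, qfacd_zero, mul_one, div_self (qfacd_ne_zero hd s),
    show ((s:ℤ) + (0:ℕ)) = (s:ℤ) by push_cast; ring] at h
  exact h

lemma qid (hd : 1 ≤ d) (a b : ℤ) :
    qd d (a+1) * qd d b = qd d a * qd d (b+1) + qd d (b-a) := by
  have e1 := qd_add (d := d) a (b-a)
  rw [show a + (b-a) = b by ring] at e1
  have e2 := qd_add (d := d) (a+1) (b-a)
  rw [show (a+1) + (b-a) = b+1 by ring] at e2
  have e3 : RatFunc.X ^ (-((d:ℤ)*a)) * qd d (a+1)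
      = 1 + RatFunc.X ^ (-((d:ℤ)*(a+1))) * qd d a := by
    have e0 := qd_add (d := d) 1 a
    rw [qd_one hd, mul_one, show (1:ℤ)+a = a+1 by ring] at e0
    rw [e0, mul_add, ← mul_assoc, ← zpow_add₀ Xne, ← zpow_add₀ Xne,
      show -((d:ℤ)*a) + (d:ℤ)*a = 0 by ring, zpow_zero,
      show -((d:ℤ)*a) + -((d:ℤ)*1) = -((d:ℤ)*(a+1)) by ring]
  linear_combination qd d (a+1) * e1 - qd d a * e2 + qd d (b-a) * e3

lemma qid' (hd : 1 ≤ d) (k : ℕ) (c : ℤ) :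
    qd d c + qd d ((k:ℤ)+1) * qd d (c+2+(k:ℤ)) = qd d ((k:ℤ)+2) * qd d (c+(k:ℤ)+1) := by
  have hq := qid hd ((k:ℤ)+1) (c+(k:ℤ)+1)
  rw [show c+(k:ℤ)+1-((k:ℤ)+1) = c by ring, show c+(k:ℤ)+1+1 = c+2+(k:ℤ) by ring,
    show (k:ℤ)+1+1 = (k:ℤ)+2 by ring] at hq
  linear_combination -hq

lemma qstar (hd : 1 ≤ d) (S M : ℤ) (t : ℕ) :
    qd d S * qbinomd d (M-1) (t+1)
      = qd d (S-((t:ℤ)+1)) * qbinomd d M (t+1) + qd d (M-S) * qbinomd d (M-1) t := by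
  have e1 := qd_add (d := d) ((t:ℤ)+1) (S-((t:ℤ)+1))
  rw [show ((t:ℤ)+1) + (S-((t:ℤ)+1)) = S by ring] at e1
  have e2 := qbinomd_A hd (M-1) t
  have e3 : RatFunc.X ^ ((d:ℤ)*(S-((t:ℤ)+1))) * qd d (M-1-(t:ℤ))
      = RatFunc.X ^ ((d:ℤ)*(M-(t:ℤ)-1)) * qd d (S-((t:ℤ)+1)) + qd d (M-S) := by
    have e0 := qd_add (d := d) (S-((t:ℤ)+1)) (M-S)
    rw [show (S-((t:ℤ)+1)) + (M-S) = M-1-(t:ℤ) by ring] at e0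
    rw [e0, mul_add, ← mul_assoc, ← mul_assoc, ← zpow_add₀ Xne, ← zpow_add₀ Xne,
      show (d:ℤ)*(S-((t:ℤ)+1)) + (d:ℤ)*(M-S) = (d:ℤ)*(M-(t:ℤ)-1) by ring,
      show (d:ℤ)*(S-((t:ℤ)+1)) + -((d:ℤ)*(S-((t:ℤ)+1))) = 0 by ring, zpow_zero, one_mul]
  have e4 := qbinomd_P2 hd M t
  have e2' : qd d ((t:ℤ)+1) * qbinomd d (M-1) (t+1)
      = qd d (M-1-(t:ℤ)) * qbinomd d (M-1) t := by
    rw [e2]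
  linear_combination qbinomd d (M-1) (t+1) * e1
    + RatFunc.X ^ ((d:ℤ)*(S-((t:ℤ)+1))) * e2'
    + qbinomd d (M-1) t * e3 - qd d (S-((t:ℤ)+1)) * e4


end ScalarLemmas

variable (root : Pi → X) (pair : Pi → X →+ ℤ) (dd : Pi → ℕ)

section OpsLemmas

variable (lam : X) (α β : Pi)

/-- The weight component: span of paths of a given height. -/
def PW (h : X) : Submodule (RatFunc ℚ) (List Pi →₀ RatFunc ℚ) :=
  Submodule.span (RatFunc ℚ) {p | ∃ δ : List Pi, hgt root δ = h ∧ p = Finsupp.single δ 1}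

lemma hgt_cons (t : List Pi) : hgt root (β :: t) = root β + hgt root t := by
  simp [hgt]

lemma phi_single (δ : List Pi) (c : RatFunc ℚ) :
    phiOp β (Finsupp.single δ c) = Finsupp.single (β :: δ) c := by
  simp [phiOp, Finsupp.mapDomain_single]

lemma phi_eq_mapDomain (x : List Pi →₀ RatFunc ℚ) :
    phiOp β x = Finsupp.mapDomain (List.cons β) x := rfl

lemma eps_single (δ : List Pi) (c : RatFunc ℚ) :
    epsOp root pair dd lam α (Finsupp.single δ c) = c • epsB root pair dd lam α δ := by
  simp [epsOp, Finsupp.linearCombination_single]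

lemma epsB_nil : epsB root pair dd lam α ([] : List Pi) = 0 := rfl

lemma epsB_cons (t : List Pi) :
    epsB root pair dd lam α (β :: t)
      = (if β = α then Finsupp.single t (qd (dd α) (pair α (lam - hgt root t))) else 0)
        + Finsupp.mapDomain (List.cons β) (epsB root pair dd lam α t) := rfl

lemma single_mem_PW (δ : List Pi) :
    Finsupp.single δ (1 : RatFunc ℚ) ∈ PW root (hgt root δ) :=
  Submodule.subset_span ⟨δ, rfl, rfl⟩

lemma nbasis_mem_PW (δ : List Pi) : nbasis dd δ ∈ PW root (hgt root δ) :=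
  Submodule.smul_mem _ _ (single_mem_PW root δ)

lemma phi_memPW {h : X} {x : List Pi →₀ RatFunc ℚ} (hx : x ∈ PW root h) :
    phiOp β x ∈ PW root (root β + h) := by
  induction hx using Submodule.span_induction with
  | mem y hy =>
      obtain ⟨δ, hδ, rfl⟩ := hy
      rw [phi_single]
      exact Submodule.subset_span ⟨β :: δ, by rw [hgt_cons, hδ], rfl⟩
  | zero => rw [map_zero]; exact zero_mem _
  | add a b _ _ ha hb => rw [map_add]; exact add_mem ha hb
  | smul c a _ hc => rw [map_smul]; exact Submodule.smul_mem _ _ hc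

lemma epsB_memPW (δ : List Pi) :
    epsB root pair dd lam α δ ∈ PW root (hgt root δ - root α) := by
  induction δ with
  | nil => rw [epsB_nil]; exact zero_mem _
  | cons β t ih =>
      rw [epsB_cons]
      apply add_mem
      · by_cases hβ : β = α
        · subst hβ
          rw [if_pos rfl]
          have h1 : Finsupp.single t (qd (dd β) (pair β (lam - hgt root t)))
              = qd (dd β) (pair β (lam - hgt root t)) • Finsupp.single t (1 : RatFunc ℚ) := by
            rw [Finsupp.smul_single, smul_eq_mul, mul_one]
          have h2 : hgt root (β :: t) - root β = hgt root t := by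
            rw [hgt_cons]; abel
          rw [h1, h2]
          exact Submodule.smul_mem _ _ (single_mem_PW root t)
        · rw [if_neg hβ]; exact zero_mem _
      · have h3 := phi_memPW root β ih
        rw [phi_eq_mapDomain] at h3
        have h4 : root β + (hgt root t - root α) = hgt root (β :: t) - root α := by
          rw [hgt_cons]; abel
        rwa [h4] at h3

lemma eps_memPW {h : X} {x : List Pi →₀ RatFunc ℚ} (hx : x ∈ PW root h) :
    epsOp root pair dd lam α x ∈ PW root (h - root α) := by
  induction hx using Submodule.span_induction with
  | mem y hy =>
      obtain ⟨δ, hδ, rfl⟩ := hy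
      rw [eps_single, one_smul, ← hδ]
      exact epsB_memPW root pair dd lam α δ
  | zero => rw [map_zero]; exact zero_mem _
  | add a b _ _ ha hb => rw [map_add]; exact add_mem ha hb
  | smul c a _ hc => rw [map_smul]; exact Submodule.smul_mem _ _ hc

lemma epsPow_memPW {h : X} {x : List Pi →₀ RatFunc ℚ} (hx : x ∈ PW root h) (n : ℕ) :
    (epsOp root pair dd lam α ^ n) x ∈ PW root (h - n • root α) := by
  induction n with
  | zero => simpa using hx
  | succ k ih =>
      have : (epsOp root pair dd lam α ^ (k+1)) x
          = epsOp root pair dd lam α ((epsOp root pair dd lam α ^ k) x) := by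
        rw [pow_succ']; rfl
      rw [this]
      have h5 := eps_memPW root pair dd lam α ih
      have h6 : h - k • root α - root α = h - (k+1) • root α := by
        rw [succ_nsmul]; abel
      rwa [h6] at h5

lemma phiPow_memPW {h : X} {x : List Pi →₀ RatFunc ℚ} (hx : x ∈ PW root h) (s : ℕ) :
    (phiOp β ^ s) x ∈ PW root (s • root β + h) := by
  induction s with
  | zero => simpa using hx
  | succ k ih =>
      have : (phiOp β ^ (k+1)) x = phiOp β ((phiOp β ^ k) x) := by
        rw [pow_succ']; rfl
      rw [this]
      have h5 := phi_memPW root β ih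
      have h6 : root β + (k • root β + h) = (k+1) • root β + h := by
        rw [succ_nsmul]; abel
      rwa [h6] at h5

lemma phiDP_memPW {h : X} {x : List Pi →₀ RatFunc ℚ} (hx : x ∈ PW root h) (s : ℕ) :
    phiDP dd β s x ∈ PW root (s • root β + h) := by
  unfold phiDP
  exact Submodule.smul_mem _ _ (phiPow_memPW root β hx s)

/-- Basic commutation relation on a weight component. -/
lemma eps_phi_comm {h : X} {x : List Pi →₀ RatFunc ℚ} (hx : x ∈ PW root h) :
    epsOp root pair dd lam α (phiOp β x)
      = (if β = α then qd (dd α) (pair α (lam - h)) else 0) • x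
        + phiOp β (epsOp root pair dd lam α x) := by
  induction hx using Submodule.span_induction with
  | mem y hy =>
      obtain ⟨δ, hδ, rfl⟩ := hy
      subst hδ
      rw [phi_single, eps_single, eps_single, one_smul, one_smul, epsB_cons]
      by_cases hβ : β = α
      · subst hβ
        rw [if_pos rfl, if_pos rfl, Finsupp.smul_single, smul_eq_mul, mul_one,
          phi_eq_mapDomain]
      · rw [if_neg hβ, if_neg hβ, zero_smul, zero_add, zero_add, phi_eq_mapDomain]
  | zero => simp
  | add a b _ _ ha hb =>
      rw [map_add, map_add, ha, hb, map_add, map_add, smul_add]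
      abel
  | smul c a _ ha =>
      rw [map_smul, map_smul, ha, map_smul, map_smul, smul_add, smul_comm]

lemma eps_phi_commute (hβ : β ≠ α) :
    Commute (phiOp β : Module.End (RatFunc ℚ) (List Pi →₀ RatFunc ℚ))
      (epsOp root pair dd lam α) := by
  apply Finsupp.lhom_ext (M := RatFunc ℚ)
  intro δ c
  show phiOp β (epsOp root pair dd lam α (Finsupp.single δ c))
      = epsOp root pair dd lam α (phiOp β (Finsupp.single δ c))
  rw [phi_single, eps_single, eps_single, epsB_cons, if_neg hβ, zero_add,
    map_smul, phi_eq_mapDomain]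

end OpsLemmas


section OpsLemmas2

variable (lam : X) (α β : Pi)

lemma epsPow_phi (hps : pair α (root α) = 2) (hd1 : 1 ≤ dd α) :
    ∀ (n : ℕ) (h : X) (x : List Pi →₀ RatFunc ℚ), x ∈ PW root h →
    (epsOp root pair dd lam α ^ (n+1)) (phiOp α x)
      = phiOp α ((epsOp root pair dd lam α ^ (n+1)) x)
        + (qd (dd α) ((n:ℤ)+1) * qd (dd α) (pair α (lam - h) + n)) •
            (epsOp root pair dd lam α ^ n) x := by
  intro n
  induction n with
  | zero =>
      intro h x hx
      have e := eps_phi_comm root pair dd lam α α hx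
      rw [if_pos rfl] at e
      rw [show (0:ℕ)+1 = 1 from rfl, pow_one, pow_zero, Module.End.one_apply, e, add_comm]
      congr 1
      push_cast
      rw [add_zero, qd_one hd1, one_mul]
  | succ k ih =>
      intro h x hx
      have hpow : ∀ (m : ℕ) (y : List Pi →₀ RatFunc ℚ),
          (epsOp root pair dd lam α ^ (m+1)) y
            = (epsOp root pair dd lam α ^ m) (epsOp root pair dd lam α y) :=
        fun m y => by rw [pow_succ]; rfl
      have e := eps_phi_comm root pair dd lam α α hx
      rw [if_pos rfl] at e
      rw [hpow (k+1), e, map_add, map_smul,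
        ih (h - root α) _ (eps_memPW root pair dd lam α hx), ← hpow k, ← hpow (k+1)]
      have hc : pair α (lam - (h - root α)) = pair α (lam - h) + 2 := by
        rw [show lam - (h - root α) = (lam - h) + root α by abel, map_add, hps]
      rw [hc]
      set v := (epsOp root pair dd lam α ^ (k+1)) x
      set w := phiOp α ((epsOp root pair dd lam α ^ (k+1+1)) x)
      rw [add_comm w _, ← add_assoc, ← add_smul, add_comm _ w]
      rw [show ((k+1:ℕ):ℤ)+1 = ((k:ℤ)+2) by push_cast; ring,
        show pair α (lam - h) + ((k+1:ℕ):ℤ) = pair α (lam - h) + (k:ℤ) + 1 by push_cast; ring,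
        qid' hd1 k (pair α (lam - h))]

lemma epsDP_zero (x : List Pi →₀ RatFunc ℚ) : epsDP root pair dd lam α 0 x = x := by
  unfold epsDP
  rw [pow_zero, qfacd_zero, inv_one, one_smul, Module.End.one_apply]

lemma phiDP_zero (x : List Pi →₀ RatFunc ℚ) : phiDP dd β 0 x = x := by
  unfold phiDP
  rw [pow_zero, qfacd_zero, inv_one, one_smul, Module.End.one_apply]

lemma phiDP_succ (s : ℕ) (x : List Pi →₀ RatFunc ℚ) :
    phiDP dd β (s+1) x = (qd (dd β) ((s:ℤ)+1))⁻¹ • phiOp β (phiDP dd β s x) := by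
  unfold phiDP
  rw [LinearMap.smul_apply, LinearMap.smul_apply, map_smul]
  have hp : (phiOp β ^ (s+1)) x = phiOp β ((phiOp β ^ s) x) := by rw [pow_succ']; rfl
  rw [hp, smul_smul]
  congr 1
  rw [qfacd_succ, mul_inv, mul_comm]

lemma phi_phiDP (hd1 : 1 ≤ dd β) (s : ℕ) (x : List Pi →₀ RatFunc ℚ) :
    phiOp β (phiDP dd β s x) = qd (dd β) ((s:ℤ)+1) • phiDP dd β (s+1) x := by
  rw [phiDP_succ, smul_smul, mul_inv_cancel₀ (qd_ne_zero hd1 (by omega)), one_smul]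

lemma epsDP_phi (hps : pair α (root α) = 2) (hd1 : 1 ≤ dd α) (n : ℕ) {h : X}
    {x : List Pi →₀ RatFunc ℚ} (hx : x ∈ PW root h) :
    epsDP root pair dd lam α (n+1) (phiOp α x)
      = phiOp α (epsDP root pair dd lam α (n+1) x)
        + qd (dd α) (pair α (lam - h) + n) • epsDP root pair dd lam α n x := by
  unfold epsDP
  rw [LinearMap.smul_apply, LinearMap.smul_apply, LinearMap.smul_apply,
    epsPow_phi root pair dd lam α hps hd1 n h x hx, smul_add, map_smul]
  congr 1
  rw [smul_smul, smul_smul]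
  congr 1
  rw [qfacd_succ]
  have h1 : qfacd (dd α) n ≠ 0 := qfacd_ne_zero hd1 n
  have h2 : qd (dd α) ((n:ℤ)+1) ≠ 0 := qd_ne_zero hd1 (by omega)
  field_simp

lemma sum_assembly (dα : ℕ) (hd1 : 1 ≤ dα) (s : ℕ) (M : ℤ)
    (T' A B : ℕ → (List Pi →₀ RatFunc ℚ))
    (hA : ∀ t, t < s+1 → A t = qd dα (((s:ℤ)+1) - t) • T' t)
    (hB : ∀ t, t < s+1 → B t = T' (t+1)) :
    (∑ t ∈ Finset.range (s+1), qbinomd dα M t • A t)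
      + qd dα (M - ((s:ℤ)+1)) • ∑ t ∈ Finset.range (s+1), qbinomd dα (M-1) t • B t
    = qd dα ((s:ℤ)+1) • ∑ u ∈ Finset.range (s+2), qbinomd dα (M-1) u • T' u := by
  have e1 : (∑ t ∈ Finset.range (s+1), qbinomd dα M t • A t)
      = ∑ t ∈ Finset.range (s+1), (qbinomd dα M t * qd dα (((s:ℤ)+1) - t)) • T' t :=
    Finset.sum_congr rfl (fun t ht => by
      rw [hA t (Finset.mem_range.mp ht), smul_smul])
  have e2 : (∑ t ∈ Finset.range (s+1), qbinomd dα (M-1) t • B t)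
      = ∑ t ∈ Finset.range (s+1), qbinomd dα (M-1) t • T' (t+1) :=
    Finset.sum_congr rfl (fun t ht => by rw [hB t (Finset.mem_range.mp ht)])
  rw [e1, e2, Finset.smul_sum, Finset.smul_sum]
  simp only [smul_smul]
  have e3 : (∑ t ∈ Finset.range (s+1), (qbinomd dα M t * qd dα (((s:ℤ)+1) - t)) • T' t)
      = ∑ t ∈ Finset.range (s+2), (qbinomd dα M t * qd dα (((s:ℤ)+1) - t)) • T' t := by
    rw [Finset.sum_range_succ (n := s+1),
      show ((s:ℤ)+1 - ((s+1:ℕ):ℤ)) = 0 by push_cast; ring, qd_zero, mul_zero, zero_smul,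
      add_zero]
  have h3 : (∑ u ∈ Finset.range (s+2), (if u = 0 then 0 else
          (qd dα (M - ((s:ℤ)+1)) * qbinomd dα (M-1) (u-1)) • T' u))
      = ∑ t ∈ Finset.range (s+1), (qd dα (M - ((s:ℤ)+1)) * qbinomd dα (M-1) t) • T' (t+1) := by
    rw [Finset.sum_range_succ' (fun u => if u = 0 then (0 : List Pi →₀ RatFunc ℚ) else
      (qd dα (M - ((s:ℤ)+1)) * qbinomd dα (M-1) (u-1)) • T' u) (s+1)]
    simp only []
    rw [if_pos trivial, add_zero]
    exact Finset.sum_congr rfl fun t _ => by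
      rw [if_neg (Nat.succ_ne_zero t), Nat.add_sub_cancel]
  rw [e3, ← h3, ← Finset.sum_add_distrib]
  apply Finset.sum_congr rfl
  intro u hu
  match u with
  | 0 =>
      rw [if_pos rfl, add_zero, qbinomd_zero, qbinomd_zero, mul_one, one_mul,
        show (((0:ℕ):ℤ)) = 0 by norm_num, sub_zero]
  | t+1 =>
      rw [if_neg (Nat.succ_ne_zero t), Nat.add_sub_cancel, ← add_smul]
      congr 1
      have hq := qstar hd1 ((s:ℤ)+1) M t
      push_cast
      linear_combination -hq

end OpsLemmas2


section OpsLemmas3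

variable (lam : X) (α : Pi)

lemma epsDP_phiDP_formula (hps : pair α (root α) = 2) (hd1 : 1 ≤ dd α) :
    ∀ (s n : ℕ) (h : X) (x : List Pi →₀ RatFunc ℚ), x ∈ PW root h →
    epsDP root pair dd lam α n (phiDP dd α s x)
      = ∑ t ∈ Finset.range (s+1),
          qbinomd (dd α) (pair α (lam - h) + (n:ℤ) - (s:ℤ)) t •
            (if t ≤ n then phiDP dd α (s-t) (epsDP root pair dd lam α (n-t) x) else 0) := by
  intro s
  induction s with
  | zero =>
      intro n h x hx
      rw [Finset.sum_range_one, phiDP_zero, qbinomd_zero, if_pos (Nat.zero_le n),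
        Nat.sub_zero, Nat.sub_zero, phiDP_zero, one_smul]
  | succ s ihs =>
      intro n h x hx
      rcases n with _ | m
      · rw [epsDP_zero,
          Finset.sum_eq_single_of_mem 0 (Finset.mem_range.mpr (by omega))
            (fun t _ htne => by rw [if_neg (by omega), smul_zero]),
          qbinomd_zero, if_pos (le_refl 0), Nat.sub_zero, Nat.sub_zero, epsDP_zero, one_smul]
      · have hy : phiDP dd α s x ∈ PW root (s • root α + h) := phiDP_memPW root dd α hx s
        have hcy : pair α (lam - (s • root α + h)) = pair α (lam - h) - 2*(s:ℤ) := by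
          rw [show lam - (s • root α + h) = (lam - h) - s • root α by abel, map_sub,
            map_nsmul, hps]
          push_cast
          ring
        rw [phiDP_succ, map_smul, epsDP_phi root pair dd lam α hps hd1 m hy, hcy,
          ihs (m+1) h x hx, ihs m h x hx,
          inv_smul_eq_iff₀ (qd_ne_zero hd1 (show ((s:ℤ)+1) ≠ 0 by omega)), map_sum]
        simp only [map_smul]
        rw [show pair α (lam - h) + ((m:ℕ):ℤ) - (s:ℤ)
            = (pair α (lam - h) + ((m+1:ℕ):ℤ) - (s:ℤ)) - 1 by push_cast; ring]
        rw [show pair α (lam - h) - 2*(s:ℤ) + (m:ℤ)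
            = (pair α (lam - h) + ((m+1:ℕ):ℤ) - (s:ℤ)) - ((s:ℤ)+1) by push_cast; ring]
        rw [show pair α (lam - h) + ((m+1:ℕ):ℤ) - ((s+1:ℕ):ℤ)
            = (pair α (lam - h) + ((m+1:ℕ):ℤ) - (s:ℤ)) - 1 by push_cast; ring]
        have hA : ∀ t, t < s+1 →
            phiOp α (if t ≤ m+1 then phiDP dd α (s-t)
                (epsDP root pair dd lam α (m+1-t) x) else 0)
              = qd (dd α) (((s:ℤ)+1) - (t:ℤ)) •
                (if t ≤ m+1 then phiDP dd α (s+1-t)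
                  (epsDP root pair dd lam α (m+1-t) x) else 0) := by
          intro t ht
          by_cases htm : t ≤ m+1
          · rw [if_pos htm, if_pos htm, phi_phiDP (β := α) dd hd1 (s-t) _]
            have hts : t ≤ s := by omega
            rw [show (((s-t:ℕ)):ℤ)+1 = ((s:ℤ)+1) - (t:ℤ) by push_cast [hts]; ring,
              show (s-t)+1 = s+1-t by omega]
          · rw [if_neg htm, if_neg htm, map_zero, smul_zero]
        have hB : ∀ t, t < s+1 →
            (if t ≤ m then phiDP dd α (s-t) (epsDP root pair dd lam α (m-t) x) else 0)
              = (if t+1 ≤ m+1 then phiDP dd α (s+1-(t+1))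
                  (epsDP root pair dd lam α (m+1-(t+1)) x) else 0) := by
          intro t ht
          rw [Nat.succ_sub_succ, Nat.succ_sub_succ]
          simp only [Nat.add_le_add_iff_right]
        exact sum_assembly (dd α) hd1 s (pair α (lam - h) + ((m+1:ℕ):ℤ) - (s:ℤ))
          (fun u => if u ≤ m+1 then phiDP dd α (s+1-u)
            (epsDP root pair dd lam α (m+1-u) x) else 0)
          (fun t => phiOp α (if t ≤ m+1 then phiDP dd α (s-t)
            (epsDP root pair dd lam α (m+1-t) x) else 0))
          (fun t => if t ≤ m then phiDP dd α (s-t)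
            (epsDP root pair dd lam α (m-t) x) else 0)
          hA hB

end OpsLemmas3

section OpsLemmas4

variable (α : Pi)

lemma runLen_cons (γ : Pi) (t : List Pi) :
    runLen α (γ :: t) = if γ = α then runLen α t + 1 else 0 := rfl

lemma phiPow_single (s : ℕ) (δ : List Pi) (c : RatFunc ℚ) :
    (phiOp α ^ s) (Finsupp.single δ c) = Finsupp.single (List.replicate s α ++ δ) c := by
  induction s with
  | zero => simp
  | succ k ih =>
      rw [show (phiOp α ^ (k+1)) (Finsupp.single δ c)
          = phiOp α ((phiOp α ^ k) (Finsupp.single δ c)) from by rw [pow_succ']; rfl, ih,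
        phi_single, List.replicate_succ, List.cons_append]

lemma runLen_replicate (s : ℕ) (δ : List Pi) :
    runLen α (List.replicate s α ++ δ) = s + runLen α δ := by
  induction s with
  | zero => simp
  | succ k ih =>
      rw [List.replicate_succ, List.cons_append, runLen_cons, if_pos rfl, ih]
      omega

lemma pfact_cons (γ : Pi) (t : List Pi) :
    pfact dd (γ :: t) = qd (dd γ) ((runLen γ t : ℤ) + 1) * pfact dd t := rfl

lemma pfact_nil : pfact dd ([] : List Pi) = 1 := rfl

lemma pfact_ne_zero (hd1 : ∀ γ, 1 ≤ dd γ) (δ : List Pi) : pfact dd δ ≠ 0 := by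
  induction δ with
  | nil => exact one_ne_zero
  | cons γ t ih =>
      rw [pfact_cons]
      exact mul_ne_zero (qd_ne_zero (hd1 γ) (by omega)) ih

lemma pfact_replicate (s : ℕ) (δ : List Pi) :
    pfact dd (List.replicate s α ++ δ) * qfacd (dd α) (runLen α δ)
      = qfacd (dd α) (s + runLen α δ) * pfact dd δ := by
  induction s with
  | zero => rw [List.replicate_zero, List.nil_append, Nat.zero_add]; ring
  | succ k ih =>
      rw [List.replicate_succ, List.cons_append, pfact_cons, runLen_replicate, mul_assoc, ih,
        show k+1+runLen α δ = (k + runLen α δ)+1 by omega, qfacd_succ]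
      push_cast
      ring

lemma nbasis_def (δ : List Pi) : nbasis dd δ = (pfact dd δ)⁻¹ • Finsupp.single δ 1 := rfl

lemma phiDP_nbasis (hd1 : ∀ γ, 1 ≤ dd γ) (s : ℕ) (δ : List Pi) :
    phiDP dd α s (nbasis dd δ)
      = qbinomd (dd α) ((s:ℤ) + (runLen α δ : ℤ)) s • nbasis dd (List.replicate s α ++ δ) := by
  unfold phiDP
  rw [LinearMap.smul_apply, nbasis_def, map_smul, phiPow_single, nbasis_def,
    smul_smul, smul_smul]
  congr 1
  have h1 := pfact_replicate dd α s δ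
  have h2 := qbinomd_nat (hd1 α) s (runLen α δ)
  rw [h2]
  have n1 : qfacd (dd α) s ≠ 0 := qfacd_ne_zero (hd1 α) s
  have n2 : qfacd (dd α) (runLen α δ) ≠ 0 := qfacd_ne_zero (hd1 α) _
  have n3 : qfacd (dd α) (s + runLen α δ) ≠ 0 := qfacd_ne_zero (hd1 α) _
  have n4 : pfact dd δ ≠ 0 := pfact_ne_zero dd hd1 δ
  have n5 : pfact dd (List.replicate s α ++ δ) ≠ 0 := pfact_ne_zero dd hd1 _
  field_simp
  linear_combination h1

lemma run_decomp_append (β : Pi) (δ : List Pi) :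
    List.replicate (runLen β δ) β ++ δ.drop (runLen β δ) = δ := by
  induction δ with
  | nil => rfl
  | cons γ t ih =>
      rw [runLen_cons]
      by_cases h : γ = β
      · subst h
        rw [if_pos rfl, List.replicate_succ, List.cons_append, List.drop_succ_cons, ih]
      · rw [if_neg h, List.replicate_zero, List.nil_append, List.drop_zero]

lemma run_rest (β : Pi) (δ : List Pi) : runLen β (δ.drop (runLen β δ)) = 0 := by
  induction δ with
  | nil => rfl
  | cons γ t ih =>
      rw [runLen_cons]
      by_cases h : γ = β
      · subst h
        rw [if_pos rfl, List.drop_succ_cons]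
        exact ih
      · rw [if_neg h, List.drop_zero, runLen_cons, if_neg h]

/-- The lattice as a `𝒵`-submodule. -/
def LZ : Submodule ZZ (List Pi →₀ RatFunc ℚ) := Submodule.span ZZ (Set.range (nbasis dd))

lemma nbasis_mem_LZ (δ : List Pi) : nbasis dd δ ∈ LZ dd := Submodule.subset_span ⟨δ, rfl⟩

lemma smul_mem_LZ {z : RatFunc ℚ} (hz : z ∈ ZZ) {v : List Pi →₀ RatFunc ℚ}
    (hv : v ∈ LZ dd) : z • v ∈ LZ dd := by
  have h1 : ((⟨z, hz⟩ : ZZ) : RatFunc ℚ) • v = (⟨z, hz⟩ : ZZ) • v :=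
    algebraMap_smul (RatFunc ℚ) (⟨z, hz⟩ : ZZ) v
  have h2 := Submodule.smul_mem (LZ dd) (⟨z, hz⟩ : ZZ) hv
  rw [← h1] at h2
  exact h2

lemma map_LZ (T : Module.End (RatFunc ℚ) (List Pi →₀ RatFunc ℚ))
    (hT : ∀ δ, T (nbasis dd δ) ∈ LZ dd) {x : List Pi →₀ RatFunc ℚ}
    (hx : x ∈ LZ dd) : T x ∈ LZ dd := by
  induction hx using Submodule.span_induction with
  | mem y hy => obtain ⟨δ, rfl⟩ := hy; exact hT δ
  | zero => rw [map_zero]; exact zero_mem _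
  | add a b _ _ ha hb => rw [map_add]; exact add_mem ha hb
  | smul z a _ ha =>
      rw [← algebraMap_smul (RatFunc ℚ) z a, map_smul, algebraMap_smul]
      exact Submodule.smul_mem _ _ ha

lemma lattice_eq : latticeP dd = ((LZ dd : Submodule ZZ (List Pi →₀ RatFunc ℚ)) :
    Set (List Pi →₀ RatFunc ℚ)) := by
  ext x
  constructor
  · rintro ⟨s, c, hc, rfl⟩
    exact sum_mem (fun δ _ => smul_mem_LZ dd (hc δ) (nbasis_mem_LZ dd δ))
  · intro hx
    obtain ⟨c, hc⟩ := Finsupp.mem_span_range_iff_exists_finsupp.mp hx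
    refine ⟨c.support, fun δ => ((c δ : ZZ) : RatFunc ℚ), fun δ => SetLike.coe_mem _, ?_⟩
    rw [← hc, Finsupp.sum]
    exact Finset.sum_congr rfl fun δ _ =>
      (algebraMap_smul (RatFunc ℚ) (c δ) (nbasis dd δ)).symm

lemma phiDP_LZ (hd1 : ∀ γ, 1 ≤ dd γ) (β : Pi) (s : ℕ) {x : List Pi →₀ RatFunc ℚ}
    (hx : x ∈ LZ dd) : phiDP dd β s x ∈ LZ dd := by
  refine map_LZ dd _ (fun δ => ?_) hx
  rw [phiDP_nbasis dd β hd1 s δ]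
  exact smul_mem_LZ dd (qbinomd_mem (hd1 β) _ _) (nbasis_mem_LZ dd _)

end OpsLemmas4

section MainLemmas

lemma epsDP_nbasis_LZ (hps : ∀ γ : Pi, pair γ (root γ) = 2) (hd1 : ∀ γ, 1 ≤ dd γ) (lam : X) :
    ∀ (L : ℕ) (δ : List Pi), δ.length ≤ L → ∀ (α : Pi) (n : ℕ),
      epsDP root pair dd lam α n (nbasis dd δ) ∈ LZ dd := by
  intro L
  induction L with
  | zero =>
      intro δ hlen α n
      have hδ : δ = [] := List.length_eq_zero_iff.mp (Nat.le_zero.mp hlen)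
      subst hδ
      have hnb : nbasis dd ([] : List Pi) = Finsupp.single [] 1 := by
        rw [nbasis_def, pfact_nil, inv_one, one_smul]
      cases n with
      | zero =>
          rw [epsDP_zero]
          exact nbasis_mem_LZ dd []
      | succ k =>
          have hz : (epsOp root pair dd lam α ^ (k+1)) (nbasis dd ([] : List Pi)) = 0 := by
            rw [pow_succ, Module.End.mul_apply, hnb, eps_single, epsB_nil, smul_zero, map_zero]
          unfold epsDP
          rw [LinearMap.smul_apply, hz, smul_zero]
          exact zero_mem _
  | succ L ihL =>
      intro δ hlen α n
      rcases δ with _ | ⟨β, t⟩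
      · exact ihL [] (by simp) α n
      · set r := runLen β (β :: t) with hr
        have hr1 : 1 ≤ r := by rw [hr, runLen_cons, if_pos rfl]; omega
        set ρ := (β :: t).drop r with hρ
        have hdec : List.replicate r β ++ ρ = β :: t := run_decomp_append β (β :: t)
        have hrest : runLen β ρ = 0 := run_rest β (β :: t)
        have hlρ : ρ.length ≤ L := by
          rw [hρ, List.length_drop]
          have : (β :: t).length = t.length + 1 := rfl
          rw [this]
          have ht : t.length + 1 ≤ L + 1 := hlen
          omega
        have hnb : nbasis dd (β :: t) = phiDP dd β r (nbasis dd ρ) := by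
          rw [phiDP_nbasis dd β hd1 r ρ, hrest,
            show ((r:ℤ) + ((0:ℕ):ℤ)) = (r:ℤ) by push_cast; ring, qbinomd_self (hd1 β) r,
            hdec, one_smul]
        rw [hnb]
        by_cases hβ : β = α
        · subst hβ
          rw [epsDP_phiDP_formula root pair dd lam β (hps β) (hd1 β) r n (hgt root ρ)
            (nbasis dd ρ) (nbasis_mem_PW root dd ρ)]
          apply sum_mem
          intro t' _
          by_cases htn : t' ≤ n
          · rw [if_pos htn]
            exact smul_mem_LZ dd (qbinomd_mem (hd1 β) _ _)
              (phiDP_LZ dd hd1 β (r - t') (ihL ρ hlρ β (n - t')))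
          · rw [if_neg htn, smul_zero]
            exact zero_mem _
        · have hcomm : Commute (phiOp β : Module.End (RatFunc ℚ) (List Pi →₀ RatFunc ℚ))
              (epsOp root pair dd lam α) := eps_phi_commute root pair dd lam α β hβ
          have hEF : (epsOp root pair dd lam α ^ n) ((phiOp β ^ r) (nbasis dd ρ))
              = (phiOp β ^ r) ((epsOp root pair dd lam α ^ n) (nbasis dd ρ)) := by
            rw [← Module.End.mul_apply, ← Module.End.mul_apply, ← hcomm.pow_pow r n]
          have hswap : epsDP root pair dd lam α n (phiDP dd β r (nbasis dd ρ))
              = phiDP dd β r (epsDP root pair dd lam α n (nbasis dd ρ)) := by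
            unfold epsDP phiDP
            simp only [LinearMap.smul_apply, map_smul]
            rw [hEF, smul_comm]
          rw [hswap]
          exact phiDP_LZ dd hd1 β r (ihL ρ hlρ α n)

end MainLemmas

theorem divided_powers_stabilize_lattice
    (hd : ∀ α, dd α ∈ ({1, 2, 3} : Set ℕ))
    (hsym : ∀ α β, (dd α : ℤ) * pair α (root β) = (dd β : ℤ) * pair β (root α))
    (hpairself : ∀ α, pair α (root α) = 2)
    (lam : X) (α : Pi) (n : ℕ) (x : List Pi →₀ RatFunc ℚ) (hx : x ∈ latticeP dd) :
    epsDP root pair dd lam α n x ∈ latticeP dd ∧ phiDP dd α n x ∈ latticeP dd := by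
  have hd1 : ∀ γ, 1 ≤ dd γ := by
    intro γ
    have := hd γ
    simp only [Set.mem_insert_iff, Set.mem_singleton_iff] at this
    rcases this with h | h | h <;> omega
  have hx' : x ∈ LZ dd := by
    rw [lattice_eq dd] at hx
    exact hx
  constructor
  · have hmem : epsDP root pair dd lam α n x ∈ LZ dd :=
      map_LZ dd _
        (fun δ => epsDP_nbasis_LZ root pair dd hpairself hd1 lam δ.length δ le_rfl α n) hx'
    rw [lattice_eq dd]
    exact hmem
  · have hmem : phiDP dd α n x ∈ LZ dd := phiDP_LZ dd hd1 α n hx'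
    rw [lattice_eq dd]
    exact hmem

end
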